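/- Let g ∈ C²(ℝ^d; ℝ) be even with ∇g(0) = 0 and with g and all of its partial derivatives up to order 2 bounded and continuous, and let ℏ, m, V₀ > 0. Define the phase function Φ(k,t) := −(V₀/ℏ)² [ g(0)t − ∫₀ᵗ g(−(2ℏs/m)k) ds ]. Let F : ℝ^d × ℝ^d → ℂ be C² with F and all of its partial derivatives up to order 2 bounded. Define R̂(k,t) := e^{Φ(k,t)} F(k, −(2ℏt/m)k). Then, as t → ∞, − Σ_{j=1}^d ∂²R̂/∂k_j²(k,t)|_{k=0} = −(1/3)(2V₀/m)² (Δg)(0) F(0,0) t³ + O(t²). In particular, if (Δg)(0) < 0 and F(0,0) > 0 the leading coefficient is positive and the growth is superballistic of order t³. -/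

import Mathlib

open intervalIntegral Filter Asymptotics

/-- The Laplacian `(Δg)(x) = Σ_i ∂²g/∂x_i²(x)` of a real-valued function on `ℝ^d`,
written via iterated directional derivatives along the coordinate directions. -/
noncomputable def coordLaplacian (d : ℕ) (g : (Fin d → ℝ) → ℝ) (x : Fin d → ℝ) : ℝ :=
  ∑ i : Fin d,
    fderiv ℝ (fun y => fderiv ℝ g y (Pi.single i 1)) x (Pi.single i 1)

set_option maxHeartbeats 2000000
set_option synthInstance.maxHeartbeats 1000000

lemma param_hasFDerivAt {d : ℕ} (φ : (Fin d → ℝ) → ℝ) (hφ : ContDiff ℝ 1 φ) (Cb : ℝ)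
    (hbd : ∀ x, ‖fderiv ℝ φ x‖ ≤ Cb) (w c : ℝ → ℝ) (hw : Continuous w) (hc : Continuous c)
    (t : ℝ) (k : Fin d → ℝ) :
    HasFDerivAt (fun x : Fin d → ℝ => ∫ s in (0:ℝ)..t, w s * φ (c s • x))
      (∫ s in (0:ℝ)..t, (w s * c s) • fderiv ℝ φ (c s • k)) k := by
  have hφd : Differentiable ℝ φ := hφ.differentiable one_ne_zero
  have hφc : Continuous (fderiv ℝ φ) := hφ.continuous_fderiv one_ne_zero
  have hdiff : ∀ s : ℝ, ∀ x : Fin d → ℝ,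
      HasFDerivAt (fun y : Fin d → ℝ => w s * φ (c s • y))
        ((w s * c s) • fderiv ℝ φ (c s • x)) x := by
    intro s x
    have h1 : HasFDerivAt (fun y : Fin d → ℝ => c s • y)
        (c s • ContinuousLinearMap.id ℝ (Fin d → ℝ)) x := by
      simpa using (c s • ContinuousLinearMap.id ℝ (Fin d → ℝ)).hasFDerivAt (x := x)
    have h2 := ((hφd (c s • x)).hasFDerivAt.comp x h1).const_mul (w s)
    refine h2.congr_fderiv ?_
    ext v
    simp [mul_comm, mul_assoc, mul_left_comm]
  exact
    (intervalIntegral.hasFDerivAt_integral_of_dominated_of_fderiv_le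
      (F := fun x s => w s * φ (c s • x))
      (F' := fun x s => (w s * c s) • fderiv ℝ φ (c s • x))
      (bound := fun s => |w s| * |c s| * max Cb 0) (x₀ := k) Filter.univ_mem
      (Filter.Eventually.of_forall fun x =>
        ((hw.mul (hφ.continuous.comp (hc.smul continuous_const))).aestronglyMeasurable).restrict)
      ((hw.mul (hφ.continuous.comp (hc.smul continuous_const))).intervalIntegrable _ _)
      (((hw.mul hc).smul (hφc.comp (hc.smul continuous_const))).aestronglyMeasurable.restrict)
      (Filter.Eventually.of_forall fun s _ => fun x _ => by
        calc ‖(w s * c s) • fderiv ℝ φ (c s • x)‖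
            = |w s| * |c s| * ‖fderiv ℝ φ (c s • x)‖ := by
              rw [norm_smul, Real.norm_eq_abs, abs_mul]
          _ ≤ |w s| * |c s| * (Cb ⊔ 0) := by
              gcongr
              exact (hbd _).trans (le_max_left _ _))
      (((hw.abs.mul hc.abs).mul continuous_const).intervalIntegrable _ _)
      (Filter.Eventually.of_forall fun s _ => fun x _ => hdiff s x))


/-- Superballistic `t³` growth from the explicit solution
`R̂(k,t) = e^{Φ(k,t)} F(k, −(2ℏt/m)k)` with phase
`Φ(k,t) = −(V₀/ℏ)² [g(0)t − ∫₀ᵗ g(−(2ℏs/m)k) ds]`: as `t → ∞`,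
`−Σ_j ∂²R̂/∂k_j²(0,t) = −(1/3)(2V₀/m)² (Δg)(0) F(0,0) t³ + O(t²)`. -/
theorem superballistic_from_explicit_solution
    (d : ℕ) (hd : 1 ≤ d) (ℏ m V₀ : ℝ) (hℏ : 0 < ℏ) (hm : 0 < m) (hV₀ : 0 < V₀)
    (g : (Fin d → ℝ) → ℝ) (hg : ContDiff ℝ 2 g)
    (hgeven : ∀ x, g (-x) = g x) (hggrad : fderiv ℝ g 0 = 0)
    (hgbdd : ∀ n : ℕ, n ≤ 2 → ∃ C : ℝ, ∀ x, ‖iteratedFDeriv ℝ n g x‖ ≤ C)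
    (F : (Fin d → ℝ) × (Fin d → ℝ) → ℂ) (hF : ContDiff ℝ 2 F)
    (hFbdd : ∀ n : ℕ, n ≤ 2 → ∃ C : ℝ, ∀ p, ‖iteratedFDeriv ℝ n F p‖ ≤ C)
    (Φ : (Fin d → ℝ) → ℝ → ℝ)
    (hΦ : ∀ (k : Fin d → ℝ) (t : ℝ),
      Φ k t = -((V₀ / ℏ) ^ 2) *
        (g 0 * t - ∫ s in (0:ℝ)..t, g (-(2 * ℏ * s / m) • k)))
    (Rhat : (Fin d → ℝ) → ℝ → ℂ)
    (hRhat : ∀ (k : Fin d → ℝ) (t : ℝ),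
      Rhat k t = (Real.exp (Φ k t) : ℝ) * F (k, -(2 * ℏ * t / m) • k)) :
    (fun t : ℝ =>
        (-(∑ j : Fin d,
            fderiv ℝ (fun k => fderiv ℝ (fun k' => Rhat k' t) k (Pi.single j 1)) 0
              (Pi.single j 1)))
          - ((-(1 / 3) * (2 * V₀ / m) ^ 2 * coordLaplacian d g 0 : ℝ) : ℂ)
              * F (0, 0) * (t : ℂ) ^ 3)
      =O[atTop] fun t : ℝ => t ^ 2 := by
  obtain ⟨C1, hC1⟩ := hgbdd 1 (by norm_num)
  obtain ⟨C2, hC2⟩ := hgbdd 2 (by norm_num)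
  obtain ⟨K2, hK2⟩ := hFbdd 2 (by norm_num)
  set σ : ℝ → ℝ := fun s => -(2 * ℏ * s / m) with hσdef
  have hσc : Continuous σ := by fun_prop
  set a : ℝ := (V₀ / ℏ) ^ 2 with hadef
  have hg1 : ContDiff ℝ 1 g := hg.of_le (by norm_num)
  have hDg : ContDiff ℝ 1 (fderiv ℝ g) := hg.fderiv_right (show (1:WithTop ℕ∞)+1 ≤ 2 by norm_num)
  have hDF : ContDiff ℝ 1 (fderiv ℝ F) := hF.fderiv_right (show (1:WithTop ℕ∞)+1 ≤ 2 by norm_num)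
  have hfb : ∀ x, ‖fderiv ℝ g x‖ ≤ C1 := by
    intro x
    rw [← norm_iteratedFDeriv_zero (𝕜 := ℝ) (f := fderiv ℝ g), norm_iteratedFDeriv_fderiv]
    exact hC1 x
  have hffb : ∀ y, ‖fderiv ℝ (fderiv ℝ g) y‖ ≤ C2 := by
    intro y
    rw [← norm_iteratedFDeriv_zero (𝕜 := ℝ) (f := fderiv ℝ (fderiv ℝ g)),
      norm_iteratedFDeriv_fderiv, norm_iteratedFDeriv_fderiv]
    exact hC2 y
  have hFfb : ‖fderiv ℝ (fderiv ℝ F) 0‖ ≤ K2 := by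
    rw [← norm_iteratedFDeriv_zero (𝕜 := ℝ) (f := fderiv ℝ (fderiv ℝ F)),
      norm_iteratedFDeriv_fderiv, norm_iteratedFDeriv_fderiv]
    exact hK2 0
  -- the key pointwise identity
  have key : ∀ (t : ℝ) (j : Fin d),
      fderiv ℝ (fun k => fderiv ℝ (fun k' => Rhat k' t) k (Pi.single j 1)) 0
          (Pi.single j 1)
        = (a * ((2 * ℏ / m) ^ 2 * (t ^ 3 / 3) *
            fderiv ℝ (fun y => fderiv ℝ g y (Pi.single j 1)) 0 (Pi.single j 1))) • F (0, 0)
          + fderiv ℝ (fderiv ℝ F) 0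
              ((Pi.single j 1 : Fin d → ℝ), -(2 * ℏ * t / m) • (Pi.single j 1 : Fin d → ℝ))
              ((Pi.single j 1 : Fin d → ℝ), -(2 * ℏ * t / m) • (Pi.single j 1 : Fin d → ℝ)) := by
    intro t j
    set e : Fin d → ℝ := Pi.single j 1 with hedef
    have hnorme : ‖e‖ = 1 := by rw [hedef, Pi.norm_single]; norm_num
    set b : ℝ := -(2 * ℏ * t / m) with hbdef
    set ℓ : (Fin d → ℝ) →L[ℝ] (Fin d → ℝ) × (Fin d → ℝ) :=
      (ContinuousLinearMap.id ℝ (Fin d → ℝ)).prod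
        (b • ContinuousLinearMap.id ℝ (Fin d → ℝ)) with hℓdef
    have hℓa : ∀ k, ℓ k = (k, b • k) := fun k => rfl
    -- derivatives of the phase integral
    have A1 : ∀ k : Fin d → ℝ, HasFDerivAt
        (fun x : Fin d → ℝ => ∫ s in (0:ℝ)..t, g (-(2 * ℏ * s / m) • x))
        (∫ s in (0:ℝ)..t, (-(2 * ℏ * s / m)) • fderiv ℝ g (-(2 * ℏ * s / m) • k)) k := by
      intro k
      have := param_hasFDerivAt g hg1 C1 hfb (fun _ => (1:ℝ))
        (fun s => -(2 * ℏ * s / m)) continuous_const (by fun_prop) t k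
      simp only [one_mul] at this
      exact this
    set Ψ' : (Fin d → ℝ) → (Fin d → ℝ) →L[ℝ] ℝ :=
      fun k => ∫ s in (0:ℝ)..t, (-(2 * ℏ * s / m)) • fderiv ℝ g (-(2 * ℏ * s / m) • k)
      with hΨdef
    have hΨ0 : Ψ' 0 = 0 := by
      rw [hΨdef]; simp [hggrad]
    -- derivative of the phase
    have hΦF : ∀ k, HasFDerivAt (fun k' => Φ k' t) (a • Ψ' k) k := by
      intro k
      have hfun : (fun k' => Φ k' t)
          = fun k' => a * (∫ s in (0:ℝ)..t, g (-(2 * ℏ * s / m) • k')) - a * (g 0 * t) := by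
        funext k'; rw [hΦ]; ring
      rw [hfun]
      exact ((A1 k).const_mul a).sub_const _
    have hΦ0 : Φ 0 t = 0 := by
      rw [hΦ]
      simp only [smul_zero, intervalIntegral.integral_const, sub_zero, smul_eq_mul]
      ring
    set G₁ : (Fin d → ℝ) → ℝ := fun y => fderiv ℝ g y e with hG₁def
    have hG₁cd : ContDiff ℝ 1 G₁ :=
      (ContinuousLinearMap.apply ℝ ℝ e).contDiff.comp hDg
    have hG₁fb : ∀ y, ‖fderiv ℝ G₁ y‖ ≤ C2 := by
      intro y
      have hfd : HasFDerivAt G₁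
          ((ContinuousLinearMap.apply ℝ ℝ e).comp (fderiv ℝ (fderiv ℝ g) y)) y :=
        (ContinuousLinearMap.apply ℝ ℝ e).hasFDerivAt.comp y
          ((hDg.differentiable one_ne_zero y).hasFDerivAt)
      rw [hfd.fderiv]
      refine ContinuousLinearMap.opNorm_le_bound _ ((norm_nonneg _).trans (hC2 0)) ?_
      intro v
      simp only [ContinuousLinearMap.comp_apply, ContinuousLinearMap.apply_apply]
      calc ‖(fderiv ℝ (fderiv ℝ g) y) v e‖ ≤ ‖(fderiv ℝ (fderiv ℝ g) y) v‖ * ‖e‖ :=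
            ContinuousLinearMap.le_opNorm _ _
        _ = ‖(fderiv ℝ (fderiv ℝ g) y) v‖ := by rw [hnorme, mul_one]
        _ ≤ ‖fderiv ℝ (fderiv ℝ g) y‖ * ‖v‖ := ContinuousLinearMap.le_opNorm _ _
        _ ≤ C2 * ‖v‖ := mul_le_mul_of_nonneg_right (hffb y) (norm_nonneg v)
    have hc' : Continuous (fun s : ℝ => -(2 * ℏ * s / m)) := by fun_prop
    set P : (Fin d → ℝ) → ℝ :=
      fun k => ∫ s in (0:ℝ)..t, (-(2 * ℏ * s / m)) * G₁ (-(2 * ℏ * s / m) • k) with hPdef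
    have hΨP : ∀ k, Ψ' k e = P k := by
      intro k
      rw [hΨdef, hPdef]
      simp only
      have hcΨ : Continuous (fun s : ℝ =>
          (-(2 * ℏ * s / m)) • fderiv ℝ g ((-(2 * ℏ * s / m)) • k)) :=
        hc'.smul ((hDg.continuous).comp (hc'.smul continuous_const))
      rw [ContinuousLinearMap.intervalIntegral_apply (hcΨ.intervalIntegrable _ _)]
      congr 1
    have hP0 : P 0 = 0 := by
      rw [hPdef]
      simp only [smul_zero, hG₁def]
      rw [hggrad]
      simp
    have hκ : (∫ s in (0:ℝ)..t, (-(2 * ℏ * s / m)) * (-(2 * ℏ * s / m)))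
        = (2 * ℏ / m) ^ 2 * (t ^ 3 / 3) := by
      have hfun : (fun s : ℝ => (-(2 * ℏ * s / m)) * (-(2 * ℏ * s / m)))
          = fun s : ℝ => (2 * ℏ / m) ^ 2 * s ^ 2 := by
        funext s; field_simp
      rw [hfun, intervalIntegral.integral_const_mul, integral_pow]
      norm_num
    have A2 : HasFDerivAt P (((2 * ℏ / m) ^ 2 * (t ^ 3 / 3)) • fderiv ℝ G₁ 0) 0 := by
      have h := param_hasFDerivAt G₁ hG₁cd C2 hG₁fb (fun s => -(2 * ℏ * s / m))
        (fun s => -(2 * ℏ * s / m)) hc' hc' t 0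
      simp only [smul_zero] at h
      rw [intervalIntegral.integral_smul_const, hκ] at h
      exact h
    -- the solution function and its full derivative
    set f : (Fin d → ℝ) → ℂ := fun k' => Rhat k' t with hfdef
    have hfun : f = fun k' => Real.exp (Φ k' t) • F (ℓ k') := by
      funext k'
      rw [hfdef]
      simp only [hRhat, hℓa, hbdef, Complex.real_smul]
    have hfd : ∀ k, HasFDerivAt f
        (Real.exp (Φ k t) • ((fderiv ℝ F (ℓ k)).comp ℓ)
          + (Real.exp (Φ k t) • (a • Ψ' k)).smulRight (F (ℓ k))) k := by
      intro k
      rw [hfun]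
      have hE : HasFDerivAt (fun k' => Real.exp (Φ k' t))
          (Real.exp (Φ k t) • (a • Ψ' k)) k := (hΦF k).exp
      have hG : HasFDerivAt (fun k' => F (ℓ k')) ((fderiv ℝ F (ℓ k)).comp ℓ) k :=
        ((hF.differentiable (by norm_num) (ℓ k)).hasFDerivAt).comp k ℓ.hasFDerivAt
      exact hE.smul hG
    have hdir : (fun k => fderiv ℝ f k e)
        = fun k => Real.exp (Φ k t) • (fderiv ℝ F (ℓ k) (ℓ e))
            + (Real.exp (Φ k t) * (a * P k)) • F (ℓ k) := by
      funext k
      rw [(hfd k).fderiv]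
      simp [ContinuousLinearMap.add_apply, ContinuousLinearMap.smul_apply,
        ContinuousLinearMap.smulRight_apply, ContinuousLinearMap.comp_apply,
        hΨP k, mul_assoc]
    have hE0 : HasFDerivAt (fun k => Real.exp (Φ k t))
        (0 : (Fin d → ℝ) →L[ℝ] ℝ) 0 := by
      have h := (hΦF 0).exp
      rw [hΨ0] at h
      simpa using h
    have hQ0 : HasFDerivAt (fun k => fderiv ℝ F (ℓ k) (ℓ e))
        ((ContinuousLinearMap.apply ℝ ℂ (ℓ e)).comp
          ((fderiv ℝ (fderiv ℝ F) 0).comp ℓ)) 0 := by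
      have h1 : HasFDerivAt (fun k => fderiv ℝ F (ℓ k))
          ((fderiv ℝ (fderiv ℝ F) 0).comp ℓ) 0 := by
        have h := ((hDF.differentiable one_ne_zero (ℓ 0)).hasFDerivAt).comp 0 ℓ.hasFDerivAt
        simpa [Function.comp_def, map_zero] using h
      have h2 := (ContinuousLinearMap.apply ℝ ℂ (ℓ e)).hasFDerivAt.comp 0 h1
      simpa [Function.comp_def] using h2
    have hG0 : HasFDerivAt (fun k => F (ℓ k)) ((fderiv ℝ F 0).comp ℓ) 0 := by
      have h := ((hF.differentiable (by norm_num) (ℓ 0)).hasFDerivAt).comp 0 ℓ.hasFDerivAt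
      simpa [Function.comp_def, map_zero] using h
    have hβ0 : HasFDerivAt (fun k => Real.exp (Φ k t) * (a * P k))
        (a • (((2 * ℏ / m) ^ 2 * (t ^ 3 / 3)) • fderiv ℝ G₁ 0)) 0 := by
      have h := hE0.mul (A2.const_mul a)
      simpa [hΦ0, hP0, Pi.mul_def] using h
    have hsum : HasFDerivAt (fun k => fderiv ℝ f k e)
        ((ContinuousLinearMap.apply ℝ ℂ (ℓ e)).comp ((fderiv ℝ (fderiv ℝ F) 0).comp ℓ)
          + (a • (((2 * ℏ / m) ^ 2 * (t ^ 3 / 3)) • fderiv ℝ G₁ 0)).smulRight (F 0)) 0 := by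
      rw [hdir]
      have h1 := hE0.smul hQ0
      have h2 := hβ0.smul hG0
      have h := h1.add h2
      have hz : ∀ z : ℂ, ((0 : (Fin d → ℝ) →L[ℝ] ℝ)).smulRight z = 0 := by
        intro z; ext v; simp
      simpa [hΦ0, hP0, map_zero, hz, Pi.add_def, Pi.smul_def'] using h
    rw [hsum.fderiv]
    simp only [ContinuousLinearMap.add_apply, ContinuousLinearMap.comp_apply,
      ContinuousLinearMap.apply_apply, ContinuousLinearMap.smulRight_apply,
      ContinuousLinearMap.smul_apply, smul_eq_mul, hℓa]
    rw [add_comm, Prod.mk_zero_zero]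
  have hK2nn : 0 ≤ K2 := (norm_nonneg _).trans (hK2 0)
  have hmain : ∀ t : ℝ,
      (-(∑ j : Fin d,
          fderiv ℝ (fun k => fderiv ℝ (fun k' => Rhat k' t) k (Pi.single j 1)) 0
            (Pi.single j 1))
        - ((-(1 / 3) * (2 * V₀ / m) ^ 2 * coordLaplacian d g 0 : ℝ) : ℂ)
            * F (0, 0) * (t : ℂ) ^ 3)
      = -(∑ j : Fin d, fderiv ℝ (fderiv ℝ F) 0
            ((Pi.single j 1 : Fin d → ℝ), -(2 * ℏ * t / m) • (Pi.single j 1 : Fin d → ℝ))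
            ((Pi.single j 1 : Fin d → ℝ), -(2 * ℏ * t / m) • (Pi.single j 1 : Fin d → ℝ))) := by
    intro t
    simp only [key]
    rw [Finset.sum_add_distrib, ← Finset.sum_smul, ← Finset.mul_sum, ← Finset.mul_sum]
    have hΔ : ∑ j : Fin d, fderiv ℝ (fun y => fderiv ℝ g y (Pi.single j 1)) 0 (Pi.single j 1)
        = coordLaplacian d g 0 := rfl
    rw [hΔ]
    have hre : (-(1 / 3) * (2 * V₀ / m) ^ 2 * coordLaplacian d g 0) * t ^ 3
        = -(a * ((2 * ℏ / m) ^ 2 * (t ^ 3 / 3) * coordLaplacian d g 0)) := by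
      rw [hadef]
      field_simp
    have hco : ((-(1 / 3) * (2 * V₀ / m) ^ 2 * coordLaplacian d g 0 : ℝ) : ℂ)
          * F (0, 0) * (t : ℂ) ^ 3
        = -((a * ((2 * ℏ / m) ^ 2 * (t ^ 3 / 3) * coordLaplacian d g 0) : ℝ) • F (0, 0)) := by
      rw [← neg_smul, ← hre, Complex.real_smul]
      push_cast
      ring
    rw [hco]
    abel
  rw [Asymptotics.isBigO_iff]
  refine ⟨d * K2 * (1 + 2 * ℏ / m) ^ 2, ?_⟩
  filter_upwards [Filter.eventually_ge_atTop (1:ℝ)] with t ht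
  rw [hmain t, norm_neg]
  have htpos : (0:ℝ) < t := lt_of_lt_of_le one_pos ht
  have hub : ∀ j : Fin d,
      ‖fderiv ℝ (fderiv ℝ F) 0
          ((Pi.single j 1 : Fin d → ℝ), -(2 * ℏ * t / m) • (Pi.single j 1 : Fin d → ℝ))
          ((Pi.single j 1 : Fin d → ℝ), -(2 * ℏ * t / m) • (Pi.single j 1 : Fin d → ℝ))‖
        ≤ K2 * ((1 + 2 * ℏ / m) * t) ^ 2 := by
    intro j
    set u : (Fin d → ℝ) × (Fin d → ℝ) :=
      ((Pi.single j 1 : Fin d → ℝ), -(2 * ℏ * t / m) • (Pi.single j 1 : Fin d → ℝ)) with hudef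
    have hnu : ‖u‖ ≤ (1 + 2 * ℏ / m) * t := by
      rw [hudef, Prod.norm_def]
      apply max_le
      · simp only [Pi.norm_single, norm_one]
        nlinarith [div_nonneg (by positivity : (0:ℝ) ≤ 2 * ℏ) hm.le]
      · rw [norm_smul, Pi.norm_single, norm_one, mul_one, Real.norm_eq_abs, abs_neg,
          abs_of_nonneg (by positivity)]
        have h2 : (1 + 2 * ℏ / m) * t - 2 * ℏ * t / m = t := by ring
        linarith [htpos.le]
    have hDu : ‖fderiv ℝ (fderiv ℝ F) 0 u‖ ≤ K2 * ((1 + 2 * ℏ / m) * t) := by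
      calc ‖fderiv ℝ (fderiv ℝ F) 0 u‖ ≤ ‖fderiv ℝ (fderiv ℝ F) 0‖ * ‖u‖ :=
            ContinuousLinearMap.le_opNorm _ _
        _ ≤ K2 * ((1 + 2 * ℏ / m) * t) :=
            mul_le_mul hFfb hnu (norm_nonneg _) hK2nn
    calc ‖fderiv ℝ (fderiv ℝ F) 0 u u‖ ≤ ‖fderiv ℝ (fderiv ℝ F) 0 u‖ * ‖u‖ :=
          ContinuousLinearMap.le_opNorm _ _
      _ ≤ (K2 * ((1 + 2 * ℏ / m) * t)) * ((1 + 2 * ℏ / m) * t) :=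
          mul_le_mul hDu hnu (norm_nonneg _) (by positivity)
      _ = K2 * ((1 + 2 * ℏ / m) * t) ^ 2 := by ring
  calc ‖∑ j : Fin d, fderiv ℝ (fderiv ℝ F) 0
          ((Pi.single j 1 : Fin d → ℝ), -(2 * ℏ * t / m) • (Pi.single j 1 : Fin d → ℝ))
          ((Pi.single j 1 : Fin d → ℝ), -(2 * ℏ * t / m) • (Pi.single j 1 : Fin d → ℝ))‖
      ≤ ∑ j : Fin d, ‖fderiv ℝ (fderiv ℝ F) 0
          ((Pi.single j 1 : Fin d → ℝ), -(2 * ℏ * t / m) • (Pi.single j 1 : Fin d → ℝ))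
          ((Pi.single j 1 : Fin d → ℝ), -(2 * ℏ * t / m) • (Pi.single j 1 : Fin d → ℝ))‖ :=
        norm_sum_le _ _
    _ ≤ ∑ _j : Fin d, K2 * ((1 + 2 * ℏ / m) * t) ^ 2 :=
        Finset.sum_le_sum fun j _ => hub j
    _ = d * (K2 * ((1 + 2 * ℏ / m) * t) ^ 2) := by
        rw [Finset.sum_const, Finset.card_univ, Fintype.card_fin, nsmul_eq_mul]
    _ ≤ d * K2 * (1 + 2 * ℏ / m) ^ 2 * ‖t ^ 2‖ := by
        rw [Real.norm_eq_abs, abs_of_nonneg (by positivity)]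
        ring_nf
        exact le_rfl
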